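/- Gauss–Radau quadrature exactness: let N ≥ 0 and let τ_0, …, τ_N be an injective enumeration of the N+1 roots of the right Radau polynomial R_{N+1}; let φ_0, …, φ_N be the Lagrange basis polynomials at these nodes and set w_p := ∫₀¹ φ_p(τ) dτ. Then for every real polynomial f of degree at most 2N, ∫₀¹ f(τ) dτ = ∑_{p=0}^{N} w_p · f(τ_p). -/

import Mathlib

open Polynomial

/-- Shifted Legendre polynomial on `[0,1]` via the Rodrigues formula. -/
noncomputable def shLegendre (n : ℕ) : Polynomial ℝ :=
  (n.factorial : ℝ)⁻¹ • derivative^[n] ((X ^ 2 - X) ^ n)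

/-- Right Radau polynomial `R_N = ((-1)^N/2) (L_N - L_{N-1})`. -/
noncomputable def rightRadau (N : ℕ) : Polynomial ℝ :=
  ((-1 : ℝ) ^ N / 2) • (shLegendre N - shLegendre (N - 1))

/-- Integral over `[0,1]` of a polynomial. -/
noncomputable def Pint (p : Polynomial ℝ) : ℝ := ∫ t in (0:ℝ)..1, p.eval t

lemma pII (p : Polynomial ℝ) :
    IntervalIntegrable (fun t => p.eval t) MeasureTheory.volume 0 1 :=
  p.continuous.intervalIntegrable _ _

lemma Pint_add (p q : Polynomial ℝ) : Pint (p + q) = Pint p + Pint q := by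
  simp only [Pint, eval_add]
  exact intervalIntegral.integral_add (pII p) (pII q)

lemma Pint_zero : Pint 0 = 0 := by simp [Pint]

lemma Pint_smul (a : ℝ) (p : Polynomial ℝ) : Pint (a • p) = a * Pint p := by
  simp only [Pint, eval_smul, smul_eq_mul]
  exact intervalIntegral.integral_const_mul a _

lemma Pint_C_mul (a : ℝ) (p : Polynomial ℝ) : Pint (C a * p) = a * Pint p := by
  rw [← smul_eq_C_mul, Pint_smul]

lemma Pint_sum {ι : Type*} (s : Finset ι) (g : ι → Polynomial ℝ) :
    Pint (∑ i ∈ s, g i) = ∑ i ∈ s, Pint (g i) := by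
  classical
  induction s using Finset.induction with
  | empty => simp [Pint_zero]
  | insert _ _ h ih => rw [Finset.sum_insert h, Pint_add, ih, Finset.sum_insert h]

lemma Pint_sub (p q : Polynomial ℝ) : Pint (p - q) = Pint p - Pint q := by
  have := Pint_add (p - q) q
  rw [sub_add_cancel] at this
  linarith

lemma Pint_derivative (p : Polynomial ℝ) :
    Pint (derivative p) = p.eval 1 - p.eval 0 := by
  unfold Pint
  exact intervalIntegral.integral_deriv_eq_sub' (fun x => p.eval x)
    (funext fun x => p.deriv)
    (fun x _ => p.differentiableAt)
    ((derivative p).continuous.continuousOn)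

/-- Derivatives of order `< n` of `(X²-X)^n` vanish at `0` and `1`. -/
lemma vanish (n m : ℕ) (hm : m < n) (x : ℝ) (hx : x = 0 ∨ x = 1) :
    (derivative^[m] ((X ^ 2 - X : Polynomial ℝ) ^ n)).eval x = 0 := by
  have hfac : (X ^ 2 - X : Polynomial ℝ) = X * (X - C 1) := by ring_nf; rw [C_1]; ring
  rcases hx with rfl | rfl
  · have hdvd : (X : Polynomial ℝ) ^ (n - m) ∣ derivative^[m] ((X ^ 2 - X) ^ n) := by
      apply pow_sub_dvd_iterate_derivative_of_pow_dvd
      rw [hfac, mul_pow]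
      exact Dvd.intro _ rfl
    obtain ⟨c, hc⟩ := hdvd
    rw [hc, eval_mul, eval_pow, eval_X, zero_pow (by omega), zero_mul]
  · have hdvd : (X - C 1 : Polynomial ℝ) ^ (n - m) ∣ derivative^[m] ((X ^ 2 - X) ^ n) := by
      apply pow_sub_dvd_iterate_derivative_of_pow_dvd
      rw [hfac, mul_pow]
      exact Dvd.intro_left _ rfl
    obtain ⟨c, hc⟩ := hdvd
    rw [hc]
    simp [Nat.sub_ne_zero_of_lt hm]

lemma ortho_aux (n : ℕ) (g : Polynomial ℝ) (k : ℕ) (hk : k ≤ n) :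
    Pint (derivative^[n] ((X ^ 2 - X) ^ n) * g) =
      (-1 : ℝ) ^ k * Pint (derivative^[n - k] ((X ^ 2 - X) ^ n) * derivative^[k] g) := by
  induction k with
  | zero => simp
  | succ k ih =>
    have hk' : k ≤ n := Nat.le_of_succ_le hk
    rw [ih hk']
    have hnk : n - k = (n - (k + 1)) + 1 := by omega
    rw [hnk, Function.iterate_succ_apply']
    set A := derivative^[n - (k + 1)] ((X ^ 2 - X : Polynomial ℝ) ^ n) with hA
    have hA0 : A.eval 0 = 0 := vanish _ _ (by omega) 0 (Or.inl rfl)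
    have hA1 : A.eval 1 = 0 := vanish _ _ (by omega) 1 (Or.inr rfl)
    have hibp := Pint_derivative (A * derivative^[k] g)
    rw [derivative_mul, Pint_add, eval_mul, eval_mul, hA0, hA1, zero_mul, zero_mul,
      sub_self] at hibp
    have key : Pint (derivative A * derivative^[k] g) =
        - Pint (A * derivative (derivative^[k] g)) := by linarith
    rw [key, Function.iterate_succ_apply']
    ring

lemma shLegendre_orth (n : ℕ) (g : Polynomial ℝ) (hg : derivative^[n] g = 0) :
    Pint (shLegendre n * g) = 0 := by
  have h := ortho_aux n g n le_rfl
  rw [Nat.sub_self, hg, Function.iterate_zero_apply, mul_zero, Pint_zero, mul_zero] at h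
  rw [shLegendre, smul_mul_assoc, Pint_smul, h, mul_zero]

lemma XsqX_monic : (X ^ 2 - X : Polynomial ℝ).Monic :=
  monic_X_pow_sub (by simpa using degree_X_le.trans_lt (by norm_num))

lemma XsqX_natDegree : (X ^ 2 - X : Polynomial ℝ).natDegree = 2 := by
  have h : (X ^ 2 - X : Polynomial ℝ).degree = 2 := by
    rw [degree_sub_eq_left_of_degree_lt]
    · exact degree_X_pow 2
    · rw [degree_X, degree_X_pow]; norm_num
  exact natDegree_eq_of_degree_eq_some h

lemma shLegendre_coeff_ne (n : ℕ) : (shLegendre n).coeff n ≠ 0 := by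
  have hP : ((X ^ 2 - X : Polynomial ℝ) ^ n).coeff (n + n) = 1 := by
    have hm := XsqX_monic.pow (n := n)
    have hd : ((X ^ 2 - X : Polynomial ℝ) ^ n).natDegree = n + n := by
      rw [XsqX_monic.natDegree_pow, XsqX_natDegree]; ring
    rw [← hd]
    exact hm.coeff_natDegree
  have h2 : (derivative^[n] ((X ^ 2 - X : Polynomial ℝ) ^ n)).coeff n =
      ((n + n).descFactorial n : ℝ) := by
    rw [coeff_iterate_derivative, hP, nsmul_eq_mul, mul_one]
  rw [shLegendre, coeff_smul, h2, smul_eq_mul]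
  have h3 : (0 : ℝ) < (n + n).descFactorial n := by
    have : (n + n).descFactorial n ≠ 0 := by
      rw [Ne, Nat.descFactorial_eq_zero_iff_lt]
      omega
    exact_mod_cast Nat.pos_of_ne_zero this
  positivity

lemma shLegendre_natDegree_le (n : ℕ) : (shLegendre n).natDegree ≤ n := by
  rw [shLegendre]
  refine (natDegree_smul_le _ _).trans ?_
  refine (natDegree_iterate_derivative _ _).trans ?_
  have : ((X ^ 2 - X : Polynomial ℝ) ^ n).natDegree = n + n := by
    rw [XsqX_monic.natDegree_pow, XsqX_natDegree]; ring
  omega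

lemma radau_coeff_ne (N : ℕ) : (rightRadau (N + 1)).coeff (N + 1) ≠ 0 := by
  rw [rightRadau, coeff_smul, coeff_sub, Nat.add_sub_cancel]
  have h0 : (shLegendre N).coeff (N + 1) = 0 :=
    coeff_eq_zero_of_natDegree_lt (lt_of_le_of_lt (shLegendre_natDegree_le N) (by omega))
  rw [h0, sub_zero, smul_eq_mul]
  exact mul_ne_zero (by positivity) (shLegendre_coeff_ne (N + 1))

lemma radau_natDegree_le (N : ℕ) : (rightRadau (N + 1)).natDegree ≤ N + 1 := by
  rw [rightRadau]
  refine (natDegree_smul_le _ _).trans ?_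
  refine (natDegree_sub_le _ _).trans ?_
  simp only [Nat.add_sub_cancel]
  exact max_le (shLegendre_natDegree_le _) ((shLegendre_natDegree_le _).trans (by omega))

lemma radau_shape (N : ℕ) : rightRadau (N + 1) =
    ((-1 : ℝ) ^ (N + 1) / 2) • (shLegendre (N + 1) - shLegendre N) := by
  rw [rightRadau, Nat.add_sub_cancel]

/-- Gauss–Radau quadrature exactness: if `τ_0, …, τ_N` is an injective enumeration of the
`N+1` roots of `R_{N+1}`, `φ_p` is the Lagrange basis at these nodes and
`w_p = ∫₀¹ φ_p`, then the quadrature `∑ w_p f(τ_p)` integrates exactly every polynomial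
`f` of degree at most `2N`. -/
theorem gaussRadau_quadrature_exact (N : ℕ) (τ : Fin (N + 1) → ℝ)
    (hτ : Function.Injective τ)
    (hroot : ∀ i, (rightRadau (N + 1)).eval (τ i) = 0)
    (φ : Fin (N + 1) → Polynomial ℝ)
    (hdeg : ∀ p, (φ p).degree ≤ (N : WithBot ℕ))
    (hval : ∀ p k, (φ p).eval (τ k) = if p = k then 1 else 0)
    (f : Polynomial ℝ) (hf : f.degree ≤ ((2 * N : ℕ) : WithBot ℕ)) :
    ∫ t in (0:ℝ)..1, f.eval t =
      ∑ p, (∫ t in (0:ℝ)..1, (φ p).eval t) * f.eval (τ p) := by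
  classical
  set R := rightRadau (N + 1) with hRdef
  set P : Polynomial ℝ := ∏ i : Fin (N + 1), (X - C (τ i)) with hPdef
  have hPmonic : P.Monic := monic_prod_of_monic _ _ fun i _ => monic_X_sub_C _
  have hPdeg : P.natDegree = N + 1 := by
    rw [hPdef, natDegree_prod _ _ (fun i _ => X_sub_C_ne_zero _)]
    simp [natDegree_X_sub_C]
  have hRcoeff : R.coeff (N + 1) ≠ 0 := radau_coeff_ne N
  have hR0 : R ≠ 0 := fun h => hRcoeff (by simp [h])
  have hRdeg : R.natDegree = N + 1 :=
    le_antisymm (radau_natDegree_le N) (le_natDegree_of_ne_zero hRcoeff)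
  -- P divides R
  have hdvd : P ∣ R := by
    have hs : (Finset.univ.val.map τ : Multiset ℝ) ≤ R.roots := by
      refine (Multiset.le_iff_subset (Finset.univ.nodup.map hτ)).2 ?_
      intro x hx
      obtain ⟨i, _, rfl⟩ := Multiset.mem_map.1 hx
      exact (mem_roots hR0).2 (hroot i)
    have hprod := (Multiset.prod_X_sub_C_dvd_iff_le_roots hR0 (Finset.univ.val.map τ)).2 hs
    have hPm : P = ((Finset.univ.val.map τ).map fun a => X - C a).prod := by
      rw [Multiset.map_map, hPdef, Finset.prod_eq_multiset_prod]
      rfl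
    rwa [hPm]
  have hfac : R = C R.leadingCoeff * P :=
    eq_leadingCoeff_mul_of_monic_of_dvd_of_natDegree_le hPmonic hdvd (by rw [hRdeg, hPdeg])
  set c := R.leadingCoeff with hcdef
  have hc : c ≠ 0 := leadingCoeff_ne_zero.2 hR0
  have hPR : P = C c⁻¹ * R := by
    rw [hfac, ← mul_assoc, ← C_mul, inv_mul_cancel₀ hc, C_1, one_mul]
  -- division with remainder
  set q := f /ₘ P with hqdef
  set r := f %ₘ P with hrdef
  have hfq : f = P * q + r := by rw [add_comm]; exact (modByMonic_add_div f P).symm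
  have hfd : f.natDegree ≤ 2 * N := natDegree_le_iff_degree_le.2 hf
  have hqD : derivative^[N] q = 0 := by
    by_cases hq : q = 0
    · simp [hq]
    · apply iterate_derivative_eq_zero
      have hge : P.degree ≤ f.degree :=
        not_lt.1 fun hlt => hq ((divByMonic_eq_zero_iff hPmonic).2 hlt)
      have h1 : N + 1 ≤ f.natDegree := by
        have := natDegree_le_natDegree hge
        rwa [hPdeg] at this
      have hq' : q.natDegree = f.natDegree - (N + 1) := by
        rw [hqdef, natDegree_divByMonic f hPmonic, hPdeg]
      omega
  have hqD1 : derivative^[N + 1] q = 0 := by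
    rw [Function.iterate_succ_apply', hqD, derivative_zero]
  -- orthogonality: ∫ R q = 0
  have hRq : Pint (R * q) = 0 := by
    rw [hRdef, radau_shape N, smul_mul_assoc, Pint_smul, sub_mul, Pint_sub,
      shLegendre_orth (N + 1) q hqD1, shLegendre_orth N q hqD, sub_zero, mul_zero]
  have hPq : Pint (P * q) = 0 := by
    rw [hPR, mul_assoc, Pint_C_mul, hRq, mul_zero]
  -- interpolation of r
  have hrdeg : r.degree < ((N + 1 : ℕ) : WithBot ℕ) := by
    have := degree_modByMonic_lt f hPmonic
    rwa [degree_eq_natDegree hPmonic.ne_zero, hPdeg] at this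
  have hrinterp : r = ∑ p, C (r.eval (τ p)) * φ p := by
    set D := r - ∑ p, C (r.eval (τ p)) * φ p with hDdef
    have hDd : D.degree < ((N + 1 : ℕ) : WithBot ℕ) := by
      refine lt_of_le_of_lt (degree_sub_le _ _) (max_lt hrdeg ?_)
      refine lt_of_le_of_lt (degree_sum_le _ _) ?_
      refine (Finset.sup_lt_iff (by exact_mod_cast WithBot.bot_lt_coe _)).2 fun p _ => ?_
      refine lt_of_le_of_lt (degree_mul_le _ _) ?_
      calc (C (r.eval (τ p))).degree + (φ p).degree
          ≤ 0 + (N : WithBot ℕ) := add_le_add degree_C_le (hdeg p)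
        _ = (N : WithBot ℕ) := zero_add _
        _ < ((N + 1 : ℕ) : WithBot ℕ) := by exact_mod_cast Nat.lt_succ_self N
    have hDev : ∀ i, D.eval (τ i) = 0 := by
      intro i
      rw [hDdef, eval_sub, eval_finset_sum]
      have : ∀ p ∈ Finset.univ, eval (τ i) (C (r.eval (τ p)) * φ p) =
          if p = i then r.eval (τ i) else 0 := by
        intro p _
        rw [eval_mul, eval_C, hval]
        by_cases h : p = i
        · subst h; simp
        · simp [h]
      rw [Finset.sum_congr rfl this, Finset.sum_ite_eq' Finset.univ i]
      simp
    have hD0 : D = 0 := by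
      by_cases hD : D = 0
      · exact hD
      · refine eq_zero_of_natDegree_lt_card_of_eval_eq_zero D hτ hDev ?_
        rw [Fintype.card_fin]
        exact (natDegree_lt_iff_degree_lt hD).2 hDd
    rw [← sub_eq_zero]
    exact hD0
  -- evaluate f at nodes
  have hPeval : ∀ p, P.eval (τ p) = 0 := by
    intro p
    rw [hPdef, eval_prod]
    exact Finset.prod_eq_zero (Finset.mem_univ p) (by simp)
  have hfeval : ∀ p, f.eval (τ p) = r.eval (τ p) := by
    intro p
    rw [hfq, eval_add, eval_mul, hPeval, zero_mul, zero_add]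
  -- assemble
  show Pint f = ∑ p, Pint (φ p) * f.eval (τ p)
  calc Pint f = Pint (P * q + r) := by rw [← hfq]
    _ = Pint (P * q) + Pint r := Pint_add _ _
    _ = Pint r := by rw [hPq, zero_add]
    _ = ∑ p, r.eval (τ p) * Pint (φ p) := by
        conv_lhs => rw [hrinterp]
        rw [Pint_sum]
        exact Finset.sum_congr rfl fun p _ => Pint_C_mul _ _
    _ = ∑ p, Pint (φ p) * f.eval (τ p) := by
        exact Finset.sum_congr rfl fun p _ => by rw [hfeval, mul_comm]
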